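/- Let k be a totally ordered rational tropical semifield and A an n×n matrix over k. Then at least one of the following holds: (i) there exist a vector v ∈ (k∖{−∞})ⁿ and an element ε ∈ k with ε > 0 such that (A ⊕ ε⊙Δ̄(A)) ⊙ v = Δ(A) ⊙ v; (ii) there exists a vector v ∈ kⁿ with v ≠ (−∞,…,−∞) such that A ⊙ v = Δ̄(A) ⊙ v. -/

import Mathlib

/-! # Tropical semifields and tropical modules -/

/-- A tropical semifield: a commutative semiring with idempotent addition
(`⊕` is `+`, `⊙` is `*`, the zero element `−∞` is `0`, the unity is `1`)
in which every nonzero element has a multiplicative inverse. -/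
class TropSemifield (k : Type*) extends CommSemiring k where
  add_idem : ∀ a : k, a + a = a
  exists_inv : ∀ a : k, a ≠ 0 → ∃ b : k, a * b = 1

/-- A tropical semigroup: commutative idempotent monoid, written additively
(the zero element is `−∞`). -/
class TropSemigroup (M : Type*) extends AddCommMonoid M where
  add_idem : ∀ v : M, v + v = v

/-- A module over a tropical semifield. -/
class TropModule (k : Type*) (M : Type*) [TropSemifield k] [TropSemigroup M] extends
    SMul k M where
  mul_smul : ∀ (a b : k) (v : M), (a * b) • v = a • b • v
  one_smul : ∀ v : M, (1 : k) • v = v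
  add_smul : ∀ (a b : k) (v : M), (a + b) • v = a • v + b • v
  smul_add : ∀ (a : k) (v w : M), a • (v + w) = a • v + a • w
  zero_smul : ∀ v : M, (0 : k) • v = 0
  smul_zero : ∀ a : k, a • (0 : M) = 0

/-- The canonical partial order `v ≤ w ↔ v ⊕ w = w`. -/
def tle {M : Type*} [Add M] (v w : M) : Prop := v + w = w

/-- Strict version of the canonical order. -/
def tlt {M : Type*} [Add M] (v w : M) : Prop := tle v w ∧ v ≠ w

/-- The canonical order of `k` is total. -/
def TotallyOrderedTSF (k : Type*) [TropSemifield k] : Prop :=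
  ∀ a b : k, tle a b ∨ tle b a

/-- Every nonempty subset of `k` admits an infimum. -/
def QuasiCompleteTSF (k : Type*) [TropSemifield k] : Prop :=
  ∀ S : Set k, S.Nonempty →
    ∃ c : k, (∀ x ∈ S, tle c x) ∧ ∀ d : k, (∀ x ∈ S, tle d x) → tle d c

/-- `k` is rational: `m`-th roots exist and `k` has no maximum element. -/
def RationalTSF (k : Type*) [TropSemifield k] : Prop :=
  (∀ (a : k) (m : ℕ), m ≠ 0 → ∃ b : k, b ^ m = a) ∧ ∀ a : k, ∃ b : k, tlt a b

instance (priority := 100) TropSemifield.toTropSemigroup (k : Type*) [TropSemifield k] :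
    TropSemigroup k :=
  { (inferInstance : AddCommMonoid k) with add_idem := TropSemifield.add_idem }

instance TropModule.self (k : Type*) [TropSemifield k] : TropModule k k :=
  { (inferInstance : SMul k k) with
    mul_smul := fun a b v => mul_assoc a b v
    one_smul := fun v => one_mul v
    add_smul := fun a b v => add_mul a b v
    smul_add := fun a v w => mul_add a v w
    zero_smul := fun v => zero_mul v
    smul_zero := fun a => mul_zero a }

instance TropSemigroup.pi {ι : Type*} (M : Type*) [TropSemigroup M] :
    TropSemigroup (ι → M) :=
  { Pi.addCommMonoid with add_idem := fun v => funext fun i => TropSemigroup.add_idem (v i) }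

instance TropModule.pi (k : Type*) {ι : Type*} (M : Type*) [TropSemifield k] [TropSemigroup M]
    [TropModule k M] : TropModule k (ι → M) where
  smul a v := fun i => a • v i
  mul_smul a b v := funext fun i => TropModule.mul_smul a b (v i)
  one_smul v := funext fun i => TropModule.one_smul (v i)
  add_smul a b v := funext fun i => TropModule.add_smul a b (v i)
  smul_add a v w := funext fun i => TropModule.smul_add a (v i) (w i)
  zero_smul v := funext fun i => TropModule.zero_smul (v i)
  smul_zero a := funext fun i => TropModule.smul_zero (a := a)

/-! ## Homomorphisms of tropical modules -/

/-- A homomorphism of `k`-modules. -/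
structure TropHom (k : Type*) (M : Type*) (N : Type*) [TropSemifield k] [TropSemigroup M]
    [TropModule k M] [TropSemigroup N] [TropModule k N] where
  toFun : M → N
  map_zero' : toFun 0 = 0
  map_add' : ∀ v w : M, toFun (v + w) = toFun v + toFun w
  map_smul' : ∀ (a : k) (v : M), toFun (a • v) = a • toFun v

namespace TropHom

variable {k M N : Type*} [TropSemifield k] [TropSemigroup M] [TropModule k M]
  [TropSemigroup N] [TropModule k N]

theorem ext' {f g : TropHom k M N} (h : ∀ v, f.toFun v = g.toFun v) : f = g := by
  cases f; cases g
  simp only [mk.injEq]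
  exact funext h

instance : Zero (TropHom k M N) :=
  ⟨⟨fun _ => 0, rfl, fun _ _ => (add_zero (0 : N)).symm,
    fun a _ => (TropModule.smul_zero (M := N) a).symm⟩⟩

instance : Add (TropHom k M N) :=
  ⟨fun f g =>
    { toFun := fun v => f.toFun v + g.toFun v
      map_zero' := by
        show f.toFun 0 + g.toFun 0 = 0
        rw [f.map_zero', g.map_zero', add_zero]
      map_add' := fun v w => by
        show f.toFun (v + w) + g.toFun (v + w) =
          (f.toFun v + g.toFun v) + (f.toFun w + g.toFun w)
        rw [f.map_add', g.map_add', add_add_add_comm]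
      map_smul' := fun a v => by
        show f.toFun (a • v) + g.toFun (a • v) = a • (f.toFun v + g.toFun v)
        rw [f.map_smul', g.map_smul', TropModule.smul_add] }⟩

instance : SMul k (TropHom k M N) :=
  ⟨fun a f =>
    { toFun := fun v => a • f.toFun v
      map_zero' := by
        show a • f.toFun 0 = 0
        rw [f.map_zero', TropModule.smul_zero]
      map_add' := fun v w => by
        show a • f.toFun (v + w) = a • f.toFun v + a • f.toFun w
        rw [f.map_add', TropModule.smul_add]
      map_smul' := fun b v => by
        show a • f.toFun (b • v) = b • (a • f.toFun v)
        rw [f.map_smul', ← TropModule.mul_smul, ← TropModule.mul_smul, mul_comm a b] }⟩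

instance : TropSemigroup (TropHom k M N) where
  add := (· + ·)
  zero := 0
  add_assoc f g h := ext' fun v => add_assoc (f.toFun v) (g.toFun v) (h.toFun v)
  zero_add f := ext' fun v => zero_add (f.toFun v)
  add_zero f := ext' fun v => add_zero (f.toFun v)
  add_comm f g := ext' fun v => add_comm (f.toFun v) (g.toFun v)
  nsmul := nsmulRec
  add_idem f := ext' fun v => TropSemigroup.add_idem (f.toFun v)

instance : TropModule k (TropHom k M N) where
  smul := (· • ·)
  mul_smul a b f := ext' fun v => TropModule.mul_smul a b (f.toFun v)
  one_smul f := ext' fun v => TropModule.one_smul (f.toFun v)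
  add_smul a b f := ext' fun v => TropModule.add_smul a b (f.toFun v)
  smul_add a f g := ext' fun v => TropModule.smul_add a (f.toFun v) (g.toFun v)
  zero_smul f := ext' fun v => TropModule.zero_smul (f.toFun v)
  smul_zero a := ext' fun v => TropModule.smul_zero (M := N) a

end TropHom

/-- The canonical map `M → (M∨)∨`, `v ↦ (ξ ↦ ⟨v, ξ⟩)`. -/
def iotaFun (k : Type*) (M : Type*) [TropSemifield k] [TropSemigroup M] [TropModule k M] :
    M → TropHom k (TropHom k M k) k :=
  fun v => ⟨fun ξ => ξ.toFun v, rfl, fun ξ η => rfl, fun a ξ => rfl⟩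

/-! ## Order-theoretic notions -/

/-- `z` is the infimum of `v` and `w` w.r.t. the canonical order. -/
def IsTInf {M : Type*} [Add M] (v w z : M) : Prop :=
  tle z v ∧ tle z w ∧ ∀ y : M, tle y v → tle y w → tle y z

/-- A tropical module is straight if it is a finitely distributive ordered lattice. -/
def Straight (M : Type*) [Add M] : Prop :=
  (∀ v w : M, ∃ z : M, IsTInf v w z) ∧
    ∀ v₁ v₂ w z₁ z₂ : M, IsTInf v₁ w z₁ → IsTInf v₂ w z₂ → IsTInf (v₁ + v₂) w (z₁ + z₂)

/-- Infimum of `v` and `w` within the subset `N`. -/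
def IsTInfOn {M : Type*} [Add M] (N : Set M) (v w z : M) : Prop :=
  tle z v ∧ tle z w ∧ ∀ y ∈ N, tle y v → tle y w → tle y z

/-- A submodule (viewed as a subset) is straight. -/
def StraightSet {M : Type*} [Add M] (N : Set M) : Prop :=
  (∀ v ∈ N, ∀ w ∈ N, ∃ z ∈ N, IsTInfOn N v w z) ∧
    ∀ v₁ ∈ N, ∀ v₂ ∈ N, ∀ w ∈ N, ∀ z₁ ∈ N, ∀ z₂ ∈ N,
      IsTInfOn N v₁ w z₁ → IsTInfOn N v₂ w z₂ → IsTInfOn N (v₁ + v₂) w (z₁ + z₂)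

/-! ## Generation, bases, extremal elements -/

/-- `S` generates the `k`-module `M`. -/
def TGenerates (k : Type*) {M : Type*} [TropSemifield k] [TropSemigroup M] [TropModule k M]
    (S : Set M) : Prop :=
  ∀ v : M, ∃ (r : ℕ) (a : Fin r → k) (x : Fin r → M), (∀ i, x i ∈ S) ∧ v = ∑ i, a i • x i

/-- `M` is finitely generated. -/
def TFG (k : Type*) (M : Type*) [TropSemifield k] [TropSemigroup M] [TropModule k M] : Prop :=
  ∃ S : Finset M, TGenerates k (↑S : Set M)

/-- A basis: a generating set no proper subset of which generates. -/
def TBasis (k : Type*) {M : Type*} [TropSemifield k] [TropSemigroup M] [TropModule k M]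
    (S : Set M) : Prop :=
  TGenerates k S ∧ ∀ T : Set M, T ⊂ S → ¬ TGenerates k T

/-- `S` generates the subset `N` (viewed as a submodule of `M`). -/
def TGeneratesOn (k : Type*) {M : Type*} [TropSemifield k] [TropSemigroup M] [TropModule k M]
    (N S : Set M) : Prop :=
  ∀ v ∈ N, ∃ (r : ℕ) (a : Fin r → k) (x : Fin r → M), (∀ i, x i ∈ S) ∧ v = ∑ i, a i • x i

/-- A basis of the submodule `N ⊆ M`. -/
def TBasisOn (k : Type*) {M : Type*} [TropSemifield k] [TropSemigroup M] [TropModule k M]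
    (N S : Set M) : Prop :=
  S ⊆ N ∧ TGeneratesOn k N S ∧ ∀ T : Set M, T ⊂ S → ¬ TGeneratesOn k N T

/-- An extremal element. -/
def TExtremal {M : Type*} [Add M] [Zero M] (e : M) : Prop :=
  e ≠ 0 ∧ ∀ v w : M, v + w = e → v = e ∨ w = e

/-- The ray `k ⊙ e` generated by an element. -/
def tray (k : Type*) {M : Type*} [TropSemifield k] [TropSemigroup M] [TropModule k M]
    (e : M) : Set M :=
  Set.range fun a : k => a • e

/-- The set of extremal rays of `M`. -/
def extRays (k : Type*) (M : Type*) [TropSemifield k] [TropSemigroup M] [TropModule k M] :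
    Set (Set M) :=
  {R : Set M | ∃ e : M, TExtremal e ∧ R = tray k e}

/-- The dimension of a straight reflexive module: the number of extremal rays. -/
noncomputable def tdim (k : Type*) (M : Type*) [TropSemifield k] [TropSemigroup M]
    [TropModule k M] : ℕ :=
  (extRays k M).ncard

/-! ## Further notions on homomorphisms -/

/-- A lightly surjective homomorphism. -/
def LightlySurjective {k M N : Type*} [TropSemifield k] [TropSemigroup M] [TropModule k M]
    [TropSemigroup N] [TropModule k N] (α : TropHom k M N) : Prop :=
  ∀ w : N, ∃ v : M, tle w (α.toFun v)

/-- A lattice-preserving homomorphism. -/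
def LatticePreserving {k M N : Type*} [TropSemifield k] [TropSemigroup M] [TropModule k M]
    [TropSemigroup N] [TropModule k N] (α : TropHom k M N) : Prop :=
  ∀ v w : M, ∀ x : N, tle x (α.toFun v) → tle x (α.toFun w) →
    ∃ y : M, tle y v ∧ tle y w ∧ tle x (α.toFun y)

/-- The inclusion of the subset `N` into the ambient module is lattice-preserving. -/
def LatPresSet {M : Type*} [Add M] (N : Set M) : Prop :=
  ∀ v ∈ N, ∀ w ∈ N, ∀ x : M, tle x v → tle x w → ∃ y ∈ N, tle y v ∧ tle y w ∧ tle x y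

/-- `η` is the dual element of `e`: `⟨e,η⟩ = 0` and
`⟨v,η⟩ ⊙ ⟨e,ξ⟩ ≤ ⟨v,ξ⟩` for all `v`, `ξ`. -/
def IsDualElement {k M : Type*} [TropSemifield k] [TropSemigroup M] [TropModule k M]
    (e : M) (η : TropHom k M k) : Prop :=
  η.toFun e = 1 ∧ ∀ (v : M) (ξ : TropHom k M k), tle (η.toFun v * ξ.toFun e) (ξ.toFun v)

/-! ## Locators -/

/-- A locator of `M`: a lower-saturated subsemigroup of `(M, ⊕)` that generates `M`. -/
structure IsLocator (k : Type*) {M : Type*} [TropSemifield k] [TropSemigroup M] [TropModule k M]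
    (S : Set M) : Prop where
  lower : ∀ v w : M, tle v w → w ∈ S → v ∈ S
  add_mem : ∀ v ∈ S, ∀ w ∈ S, v + w ∈ S
  generates : TGenerates k S

/-- The multiplicative inverse `⊘a` (junk value `−∞` at `−∞`). -/
noncomputable def tinv {k : Type*} [TropSemifield k] (a : k) : k := by
  classical exact if h : a = 0 then 0 else Classical.choose (TropSemifield.exists_inv a h)

/-- Scalar multiplication on locators: `a ⊙̌ S = (⊘a) ⊙ S` for `a ≠ −∞`, `(−∞) ⊙̌ S = M`. -/
noncomputable def locSMul {k M : Type*} [TropSemifield k] [TropSemigroup M] [TropModule k M]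
    (a : k) (S : Set M) : Set M := by
  classical exact if a = 0 then Set.univ else (fun v => tinv a • v) '' S

/-- `U` is the infimum of the locators `S`, `T` in `Loc(M)` (whose canonical
order is reverse inclusion, the sum being intersection). -/
def IsLocInf (k : Type*) {M : Type*} [TropSemifield k] [TropSemigroup M] [TropModule k M]
    (S T U : Set M) : Prop :=
  IsLocator k U ∧ S ⊆ U ∧ T ⊆ U ∧
    ∀ W : Set M, IsLocator k W → S ⊆ W → T ⊆ W → U ⊆ W

/-! ## Submodules -/

/-- A subset of a `k`-module which is a submodule. -/
structure IsTSubmodule (k : Type*) {M : Type*} [TropSemifield k] [TropSemigroup M]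
    [TropModule k M] (N : Set M) : Prop where
  zero_mem : (0 : M) ∈ N
  add_mem : ∀ v ∈ N, ∀ w ∈ N, v + w ∈ N
  smul_mem : ∀ (a : k), ∀ v ∈ N, a • v ∈ N

/-- A bundled submodule of a `k`-module. -/
structure TSub (k : Type*) (M : Type*) [TropSemifield k] [TropSemigroup M] [TropModule k M] where
  carrier : Set M
  zero_mem : (0 : M) ∈ carrier
  add_mem : ∀ v ∈ carrier, ∀ w ∈ carrier, v + w ∈ carrier
  smul_mem : ∀ (a : k), ∀ v ∈ carrier, a • v ∈ carrier

instance TSub.instZero {k M : Type*} [TropSemifield k] [TropSemigroup M] [TropModule k M]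
    (N : TSub k M) : Zero ↥N.carrier :=
  ⟨⟨0, N.zero_mem⟩⟩

instance TSub.instAdd {k M : Type*} [TropSemifield k] [TropSemigroup M] [TropModule k M]
    (N : TSub k M) : Add ↥N.carrier :=
  ⟨fun v w => ⟨v.1 + w.1, N.add_mem v.1 v.2 w.1 w.2⟩⟩

instance TSub.instSMul {k M : Type*} [TropSemifield k] [TropSemigroup M] [TropModule k M]
    (N : TSub k M) : SMul k ↥N.carrier :=
  ⟨fun a v => ⟨a • v.1, N.smul_mem a v.1 v.2⟩⟩

instance TSub.semigroup {k M : Type*} [TropSemifield k] [TropSemigroup M] [TropModule k M]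
    (N : TSub k M) : TropSemigroup ↥N.carrier where
  add := (· + ·)
  zero := 0
  add_assoc a b c := Subtype.ext (add_assoc a.1 b.1 c.1)
  zero_add a := Subtype.ext (zero_add a.1)
  add_zero a := Subtype.ext (add_zero a.1)
  add_comm a b := Subtype.ext (add_comm a.1 b.1)
  nsmul := nsmulRec
  add_idem a := Subtype.ext (TropSemigroup.add_idem a.1)

instance TSub.module {k M : Type*} [TropSemifield k] [TropSemigroup M] [TropModule k M]
    (N : TSub k M) : TropModule k ↥N.carrier where
  smul := (· • ·)
  mul_smul a b v := Subtype.ext (TropModule.mul_smul a b v.1)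
  one_smul v := Subtype.ext (TropModule.one_smul v.1)
  add_smul a b v := Subtype.ext (TropModule.add_smul a b v.1)
  smul_add a v w := Subtype.ext (TropModule.smul_add a v.1 w.1)
  zero_smul v := Subtype.ext (TropModule.zero_smul v.1)
  smul_zero a := Subtype.ext (TropModule.smul_zero (M := M) a)

/-! ## Linear combinations -/

theorem tsmul_sum {k M : Type*} [TropSemifield k] [TropSemigroup M] [TropModule k M]
    (a : k) {ι : Type*} (s : Finset ι) (f : ι → M) :
    a • (∑ i ∈ s, f i) = ∑ i ∈ s, a • f i := by
  classical
  induction s using Finset.induction_on with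
  | empty => simpa using TropModule.smul_zero (M := M) a
  | insert _ _ h ih => rw [Finset.sum_insert h, Finset.sum_insert h, TropModule.smul_add, ih]

/-- The homomorphism `kⁿ → M` sending the `i`-th standard basis element to `e i`. -/
def linComb {k M : Type*} [TropSemifield k] [TropSemigroup M] [TropModule k M] {n : ℕ}
    (e : Fin n → M) : TropHom k (Fin n → k) M where
  toFun v := ∑ i, v i • e i
  map_zero' :=
    (Finset.sum_congr rfl fun i _ => TropModule.zero_smul (e i)).trans Finset.sum_const_zero
  map_add' v w := by
    rw [← Finset.sum_add_distrib]
    exact Finset.sum_congr rfl fun i _ => TropModule.add_smul (v i) (w i) (e i)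
  map_smul' a v := by
    rw [tsmul_sum]
    exact Finset.sum_congr rfl fun i _ => TropModule.mul_smul a (v i) (e i)

/-- The homomorphism `M → kⁿ` induced by an `n`-tuple of elements of `M∨`. -/
def dualTuple {k M : Type*} [TropSemifield k] [TropSemigroup M] [TropModule k M] {n : ℕ}
    (η : Fin n → TropHom k M k) : TropHom k M (Fin n → k) where
  toFun v := fun i => (η i).toFun v
  map_zero' := funext fun i => (η i).map_zero'
  map_add' v w := funext fun i => (η i).map_add' v w
  map_smul' a v := funext fun i => (η i).map_smul' a v

/-- The diagonal part `Δ(A)` of a square matrix. -/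
def diagPart {k : Type*} [TropSemifield k] {n : ℕ} (A : Matrix (Fin n) (Fin n) k) :
    Matrix (Fin n) (Fin n) k :=
  Matrix.of fun i j => if i = j then A i j else 0

/-- The off-diagonal part `Δ̄(A)` of a square matrix. -/
def offDiagPart {k : Type*} [TropSemifield k] {n : ℕ} (A : Matrix (Fin n) (Fin n) k) :
    Matrix (Fin n) (Fin n) k :=
  Matrix.of fun i j => if i = j then 0 else A i j

/-! ### Auxiliary order lemmas -/

section Aux

variable {k : Type*} [TropSemifield k]

lemma tle_refl' (a : k) : tle a a := TropSemifield.add_idem a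

lemma zero_tle' (a : k) : tle 0 a := zero_add a

lemma tle_trans' {a b c : k} (h1 : tle a b) (h2 : tle b c) : tle a c := by
  unfold tle at *; rw [← h2, ← add_assoc, h1]

lemma tle_antisymm' {a b : k} (h1 : tle a b) (h2 : tle b a) : a = b := by
  unfold tle at *; rw [← h1, add_comm]; exact h2.symm

lemma tle_add_right' (a b : k) : tle a (a + b) := by
  unfold tle; rw [← add_assoc, TropSemifield.add_idem]

lemma tle_add_left' (a b : k) : tle b (a + b) := by
  rw [add_comm]; exact tle_add_right' b a

lemma add_tle' {a b c : k} (h1 : tle a c) (h2 : tle b c) : tle (a + b) c := by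
  unfold tle at *; rw [add_assoc, h2]; exact h1

lemma tle_mul_left' {a b : k} (c : k) (h : tle a b) : tle (c * a) (c * b) := by
  unfold tle at *; rw [← mul_add, h]

lemma tle_mul_right' {a b : k} (c : k) (h : tle a b) : tle (a * c) (b * c) := by
  unfold tle at *; rw [← add_mul, h]

lemma sum_tle' {ι : Type*} {s : Finset ι} {f : ι → k} {c : k}
    (h : ∀ i ∈ s, tle (f i) c) : tle (∑ i ∈ s, f i) c := by
  classical
  induction s using Finset.induction_on with
  | empty => simpa using zero_tle' c
  | @insert a s ha ih =>
    rw [Finset.sum_insert ha]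
    exact add_tle' (h a (Finset.mem_insert_self a s))
      (ih fun i hi => h i (Finset.mem_insert_of_mem hi))

lemma tle_sum' {ι : Type*} {s : Finset ι} {f : ι → k} {i : ι} (hi : i ∈ s) :
    tle (f i) (∑ j ∈ s, f j) := by
  classical rw [← Finset.add_sum_erase s f hi]; exact tle_add_right' _ _

lemma one_ne_zero'' (hrat : RationalTSF k) : (1 : k) ≠ 0 := by
  obtain ⟨b, hb⟩ := hrat.2 0
  intro h
  exact hb.2 (by rw [← mul_one b, h, mul_zero])

lemma mul_tinv' {a : k} (ha : a ≠ 0) : a * tinv a = 1 := by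
  unfold tinv
  rw [dif_neg ha]
  exact Classical.choose_spec (TropSemifield.exists_inv a ha)

lemma mul_ne_zero'' (h1 : (1 : k) ≠ 0) {a b : k} (ha : a ≠ 0) (hb : b ≠ 0) :
    a * b ≠ 0 := by
  intro h
  apply h1
  calc (1 : k) = a * tinv a * (b * tinv b) := by rw [mul_tinv' ha, mul_tinv' hb, mul_one]
    _ = a * b * (tinv a * tinv b) := by ring
    _ = 0 := by rw [h, zero_mul]

lemma tinv_ne_zero' (h1 : (1 : k) ≠ 0) {a : k} (ha : a ≠ 0) : tinv a ≠ 0 := by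
  intro h
  exact h1 (by rw [← mul_tinv' ha, h, mul_zero])

lemma ne_zero_of_tle' {a b : k} (h : tle a b) (ha : a ≠ 0) : b ≠ 0 := by
  intro hb; apply ha; unfold tle at h; rw [hb, add_zero] at h; exact h

lemma exists_sqrt_gt_one (hto : TotallyOrderedTSF k) (hrat : RationalTSF k) {a : k}
    (ha : tlt 1 a) : ∃ b : k, b * b = a ∧ tlt 1 b := by
  obtain ⟨b, hb⟩ := hrat.1 a 2 (by norm_num)
  have hb2 : b * b = a := by rw [← hb]; ring
  refine ⟨b, hb2, ?_, ?_⟩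
  · rcases hto 1 b with h | h
    · exact h
    · exfalso
      apply ha.2
      refine tle_antisymm' ha.1 ?_
      have h2 := tle_mul_right' b h
      rw [one_mul] at h2
      have h3 := tle_trans' h2 h
      rw [hb2] at h3
      exact h3
  · intro e
    apply ha.2
    rw [← hb2, ← e, mul_one]

lemma tinv_gt_one (hto : TotallyOrderedTSF k) {c : k} (hc0 : c ≠ 0) (hc : ¬ tle 1 c) :
    tlt 1 (tinv c) := by
  constructor
  · rcases hto 1 (tinv c) with h | h
    · exact h
    · exfalso
      apply hc
      have h2 := tle_mul_left' c h
      rwa [mul_tinv' hc0, mul_one] at h2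
  · intro e
    apply hc
    have : c = c * tinv c := by rw [← e, mul_one]
    rw [this, mul_tinv' hc0]
    exact tle_refl' 1

/-- Minimum of a default element and finitely many values. -/
lemma exists_min' (hto : TotallyOrderedTSF k) {ι : Type*} (s : Finset ι) (f : ι → k) (d : k) :
    ∃ m : k, tle m d ∧ (∀ i ∈ s, tle m (f i)) ∧ (m = d ∨ ∃ i ∈ s, m = f i) := by
  classical
  induction s using Finset.induction_on with
  | empty => exact ⟨d, tle_refl' d, by simp, Or.inl rfl⟩
  | @insert a s ha ih =>
    obtain ⟨m, hmd, hms, hcase⟩ := ih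
    rcases hto m (f a) with h | h
    · refine ⟨m, hmd, ?_, ?_⟩
      · intro i hi
        rcases Finset.mem_insert.mp hi with rfl | hi
        · exact h
        · exact hms i hi
      · rcases hcase with h' | ⟨i, hi, h'⟩
        · exact Or.inl h'
        · exact Or.inr ⟨i, Finset.mem_insert_of_mem hi, h'⟩
    · refine ⟨f a, tle_trans' h hmd, ?_, Or.inr ⟨a, Finset.mem_insert_self a s, rfl⟩⟩
      intro i hi
      rcases Finset.mem_insert.mp hi with rfl | hi
      · exact tle_refl' _
      · exact tle_trans' h (hms i hi)

end Aux

/-- Core combinatorial lemma: for any matrix of "weights" `B`, either there is a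
strictly dominating scaling, or a vector witnessing a heavy cycle. -/
lemma core_lemma {k : Type*} [TropSemifield k] (hto : TotallyOrderedTSF k)
    (hrat : RationalTSF k) :
    ∀ (n : ℕ) (B : Matrix (Fin n) (Fin n) k),
      (∃ (v : Fin n → k) (ε : k), (∀ i, v i ≠ 0) ∧ tlt (1 : k) ε ∧
          ∀ i j, i ≠ j → tle (ε * B i j * v j) (v i)) ∨
      (∃ v : Fin n → k, v ≠ 0 ∧
          ∀ i, tle (v i) (∑ j ∈ Finset.univ.erase i, B i j * v j)) := by
  classical
  have h10 : (1 : k) ≠ 0 := one_ne_zero'' hrat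
  intro n
  induction n with
  | zero =>
    intro B
    obtain ⟨ε, hε⟩ := hrat.2 1
    exact Or.inl ⟨fun i => i.elim0, ε, fun i => i.elim0, hε, fun i => i.elim0⟩
  | succ n ih =>
    intro B
    set L : Fin (n + 1) := Fin.last n with hL
    by_cases h2c : ∃ j : Fin (n + 1), j ≠ L ∧ tle 1 (B L j * B j L)
    · -- a heavy 2-cycle through L : case (ii)
      obtain ⟨j, hjL, hcyc⟩ := h2c
      set w : Fin (n + 1) → k := fun i => if i = L then 1 else if i = j then B j L else 0
        with hw
      have hwL : w L = 1 := if_pos rfl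
      have hwj : w j = B j L := by simp [hw, hjL]
      refine Or.inr ⟨w, ?_, ?_⟩
      · intro h
        have h1 := congrFun h L
        rw [hwL] at h1
        exact h10 h1
      · intro i
        by_cases hiL : i = L
        · rw [hiL, hwL]
          have hterm : tle 1 (B L j * w j) := by
            rw [hwj]; exact hcyc
          exact tle_trans' hterm (tle_sum' (f := fun l => B L l * w l)
            (Finset.mem_erase.mpr ⟨hjL, Finset.mem_univ j⟩))
        · by_cases hij : i = j
          · rw [hij, hwj]
            have hterm : tle (B j L) (B j L * w L) := by
              rw [hwL, mul_one]; exact tle_refl' _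
            exact tle_trans' hterm (tle_sum' (f := fun l => B j l * w l)
              (Finset.mem_erase.mpr ⟨Ne.symm hjL, Finset.mem_univ L⟩))
          · have hwi : w i = 0 := by simp [hw, hiL, hij]
            rw [hwi]
            exact zero_tle' _
    · push_neg at h2c
      -- eliminate the last vertex
      set B' : Matrix (Fin n) (Fin n) k :=
        Matrix.of (fun i j => B i.castSucc j.castSucc + B i.castSucc L * B L j.castSucc)
          with hB'
      rcases ih B' with ⟨v', ε', hv'0, hε', h'⟩ | ⟨v', hv'ne, h'⟩
      · -- case (i) propagates
        -- choose ρ ≤ ε' and ρ * (B iL * B Li) ≤ 1 for all i, with 1 < ρ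
        have hcap : ∀ i : Fin n, B i.castSucc L * B L i.castSucc ≠ 0 →
            tlt 1 (tinv (B i.castSucc L * B L i.castSucc)) := by
          intro i hne
          refine tinv_gt_one hto hne ?_
          intro hle
          exact h2c i.castSucc ((Fin.castSucc_lt_last i).ne) (by
            rwa [mul_comm] at hle)
        obtain ⟨ρ, hρε', hρs, hρcase⟩ := exists_min' hto
          (Finset.univ.filter fun i : Fin n => B i.castSucc L * B L i.castSucc ≠ 0)
          (fun i => tinv (B i.castSucc L * B L i.castSucc)) ε'
        have hρ1 : tlt 1 ρ := by
          rcases hρcase with rfl | ⟨i, hi, rfl⟩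
          · exact hε'
          · exact hcap i (Finset.mem_filter.mp hi).2
        have hρc : ∀ i : Fin n, tle (ρ * (B i.castSucc L * B L i.castSucc)) 1 := by
          intro i
          by_cases hz : B i.castSucc L * B L i.castSucc = 0
          · rw [hz, mul_zero]; exact zero_tle' 1
          · have h1 := tle_mul_right' (B i.castSucc L * B L i.castSucc)
              (hρs i (Finset.mem_filter.mpr ⟨Finset.mem_univ i, hz⟩))
            rwa [mul_comm (tinv _) _, mul_tinv' hz] at h1
        obtain ⟨ε, hεsq, hε1⟩ := exists_sqrt_gt_one hto hrat hρ1
        have hερ : tle ε ρ := by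
          have := tle_mul_left' ε hε1.1
          rwa [mul_one, hεsq] at this
        have hεε' : tle ε ε' := tle_trans' hερ hρε'
        -- choose s ≤ v' i / (ε * B (cs i) L) for all relevant i
        obtain ⟨s, _, hss, hscase⟩ := exists_min' hto
          (Finset.univ.filter fun i : Fin n => B i.castSucc L ≠ 0)
          (fun i => v' i * tinv (ε * B i.castSucc L)) 1
        have hε0 : ε ≠ 0 := ne_zero_of_tle' hε1.1 h10
        have hs0 : s ≠ 0 := by
          rcases hscase with rfl | ⟨i, hi, rfl⟩
          · exact h10
          · exact mul_ne_zero'' h10 (hv'0 i)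
              (tinv_ne_zero' h10 (mul_ne_zero'' h10 hε0 (Finset.mem_filter.mp hi).2))
        have hsbound : ∀ i : Fin n, tle (ε * B i.castSucc L * s) (v' i) := by
          intro i
          by_cases hz : B i.castSucc L = 0
          · rw [hz, mul_zero, zero_mul]; exact zero_tle' _
          · have h1 := tle_mul_left' (ε * B i.castSucc L)
              (hss i (Finset.mem_filter.mpr ⟨Finset.mem_univ i, hz⟩))
            have h2 : ε * B i.castSucc L * (v' i * tinv (ε * B i.castSucc L)) = v' i := by
              calc ε * B i.castSucc L * (v' i * tinv (ε * B i.castSucc L))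
                  = ε * B i.castSucc L * tinv (ε * B i.castSucc L) * v' i := by ring
                _ = 1 * v' i := by rw [mul_tinv' (mul_ne_zero'' h10 hε0 hz)]
                _ = v' i := one_mul _
            rw [h2] at h1
            exact h1
        -- the new vector
        set vL : k := s + ∑ j : Fin n, ε * B L j.castSucc * v' j with hvL
        set v : Fin (n + 1) → k := Fin.snoc v' vL with hv
        have hvcs : ∀ i : Fin n, v i.castSucc = v' i := fun i => by simp [hv]
        have hvlast : v L = vL := by simp [hv, hL]
        refine Or.inl ⟨v, ε, ?_, hε1, ?_⟩
        · intro i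
          induction i using Fin.lastCases with
          | last => rw [hvlast]; exact ne_zero_of_tle' (tle_add_right' s _) hs0
          | cast c => rw [hvcs]; exact hv'0 c
        · intro i j hij
          induction i using Fin.lastCases with
          | last =>
            induction j using Fin.lastCases with
            | last => exact absurd rfl hij
            | cast b =>
              rw [hvcs, hvlast, hvL]
              exact tle_trans'
                (tle_sum' (f := fun j => ε * B L j.castSucc * v' j) (Finset.mem_univ b))
                (tle_add_left' s _)
          | cast a =>
            induction j using Fin.lastCases with
            | last =>
              rw [hvcs, hvlast, hvL, mul_add]
              refine add_tle' (hsbound a) ?_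
              rw [Finset.mul_sum]
              refine sum_tle' ?_
              intro b _
              by_cases hab : b = a
              · subst hab
                have key : ε * B b.castSucc L * (ε * B L b.castSucc * v' b)
                    = (ρ * (B b.castSucc L * B L b.castSucc)) * v' b := by
                  rw [← hεsq]; ring
                rw [key]
                have := tle_mul_right' (v' b) (hρc b)
                rw [one_mul] at this
                exact this
              · have key : ε * B a.castSucc L * (ε * B L b.castSucc * v' b)
                    = (ε * ε) * (B a.castSucc L * B L b.castSucc) * v' b := by ring
                rw [key, hεsq]
                have h1 : tle (ρ * (B a.castSucc L * B L b.castSucc) * v' b)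
                    (ε' * B' a b * v' b) := by
                  refine tle_mul_right' (v' b) ?_
                  refine tle_trans' (tle_mul_right' _ hρε') ?_
                  have hBab : B' a b
                      = B a.castSucc b.castSucc + B a.castSucc L * B L b.castSucc := rfl
                  rw [hBab]
                  exact tle_mul_left' ε' (tle_add_left' _ _)
                exact tle_trans' h1 (h' a b (fun h => hab (by rw [h])))
            | cast b =>
              have hab : a ≠ b := fun h => hij (by rw [h])
              rw [hvcs, hvcs]
              have h1 : tle (ε * B a.castSucc b.castSucc * v' b)
                  (ε' * B' a b * v' b) := by
                refine tle_mul_right' (v' b) ?_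
                refine tle_trans' (tle_mul_right' _ hεε') ?_
                have hBab : B' a b
                    = B a.castSucc b.castSucc + B a.castSucc L * B L b.castSucc := rfl
                rw [hBab]
                exact tle_mul_left' ε' (tle_add_right' _ _)
              exact tle_trans' h1 (h' a b hab)
      · -- case (ii) propagates
        set vL : k := ∑ j : Fin n, B L j.castSucc * v' j with hvL
        set v : Fin (n + 1) → k := Fin.snoc v' vL with hv
        have hvcs : ∀ i : Fin n, v i.castSucc = v' i := fun i => by simp [hv]
        have hvlast : v L = vL := by simp [hv, hL]
        refine Or.inr ⟨v, ?_, ?_⟩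
        · intro h
          apply hv'ne
          funext i
          have := congrFun h i.castSucc
          rw [hvcs] at this
          exact this
        · intro i
          induction i using Fin.lastCases with
          | last =>
            rw [hvlast, hvL]
            refine sum_tle' ?_
            intro b _
            rw [← hvcs b]
            exact tle_sum' (f := fun l => B L l * v l) (Finset.mem_erase.mpr
              ⟨(Fin.castSucc_lt_last b).ne, Finset.mem_univ _⟩)
          | cast c =>
            rw [hvcs]
            refine tle_trans' (h' c) (sum_tle' ?_)
            intro b hb
            have hbc : b ≠ c := (Finset.mem_erase.mp hb).1
            have expand : B' c b * v' b
                = B c.castSucc b.castSucc * v b.castSucc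
                  + B c.castSucc L * (B L b.castSucc * v' b) := by
              have hBcb : B' c b
                  = B c.castSucc b.castSucc + B c.castSucc L * B L b.castSucc := rfl
              rw [hvcs, hBcb]
              ring
            rw [expand]
            refine add_tle' ?_ ?_
            · exact tle_sum' (f := fun l => B c.castSucc l * v l) (Finset.mem_erase.mpr
                ⟨fun h => hbc (Fin.castSucc_injective n h), Finset.mem_univ _⟩)
            · have h2 : tle (B L b.castSucc * v' b) (v L) := by
                rw [hvlast, hvL]
                exact tle_sum' (f := fun j => B L j.castSucc * v' j) (Finset.mem_univ b)
              refine tle_trans' (tle_mul_left' (B c.castSucc L) h2) ?_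
              exact tle_sum' (f := fun l => B c.castSucc l * v l) (Finset.mem_erase.mpr
                ⟨fun h => (Fin.castSucc_lt_last c).ne h.symm,
                  Finset.mem_univ _⟩)

theorem stmt19 {k : Type*} [TropSemifield k]
    (hto : TotallyOrderedTSF k) (hrat : RationalTSF k)
    {n : ℕ} (A : Matrix (Fin n) (Fin n) k) :
    (∃ (v : Fin n → k) (ε : k), (∀ i, v i ≠ 0) ∧ tlt (1 : k) ε ∧
        (A + ε • offDiagPart A).mulVec v = (diagPart A).mulVec v) ∨
    ∃ v : Fin n → k, v ≠ 0 ∧ A.mulVec v = (offDiagPart A).mulVec v := by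
  classical
  by_cases hdiag : ∃ i, A i i = 0
  · -- a vanishing diagonal entry: use the corresponding basis vector
    obtain ⟨i, hAii⟩ := hdiag
    refine Or.inr ⟨fun l => if l = i then 1 else 0, ?_, ?_⟩
    · intro h
      have h1 := congrFun h i
      simp at h1
      exact one_ne_zero'' hrat h1
    · funext j
      have e1 : A.mulVec (fun l => if l = i then 1 else 0) j = A j i := by
        simp [Matrix.mulVec, dotProduct, mul_ite, mul_one, mul_zero]
      have e2 : (offDiagPart A).mulVec (fun l => if l = i then 1 else 0) j
          = if j = i then 0 else A j i := by
        simp [Matrix.mulVec, dotProduct, offDiagPart, mul_ite, mul_one, mul_zero]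
      rw [e1, e2]
      by_cases hji : j = i
      · rw [if_pos hji, hji, hAii]
      · rw [if_neg hji]
  · push_neg at hdiag
    have h10 : (1 : k) ≠ 0 := one_ne_zero'' hrat
    set Bm : Matrix (Fin n) (Fin n) k := Matrix.of fun i j => A i j * tinv (A i i) with hBm
    have hBmapp : ∀ i j, Bm i j = A i j * tinv (A i i) := fun i j => rfl
    rcases core_lemma hto hrat n Bm with ⟨v, ε, hv0, hε, hB⟩ | ⟨v, hvne, hB⟩
    · refine Or.inl ⟨v, ε, hv0, hε, ?_⟩
      funext i
      have eR : (diagPart A).mulVec v i = A i i * v i := by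
        simp [Matrix.mulVec, dotProduct, diagPart, ite_mul, zero_mul]
      have eL : (A + ε • offDiagPart A).mulVec v i
          = ∑ j, (A i j + ε * offDiagPart A i j) * v j := by
        simp [Matrix.mulVec, dotProduct, Matrix.add_apply, Matrix.smul_apply,
          smul_eq_mul]
      have hoffd : offDiagPart A i i = 0 := by simp [offDiagPart]
      rw [eL, eR]
      refine tle_antisymm' ?_ ?_
      · refine sum_tle' ?_
        intro j _
        by_cases hij : j = i
        · subst hij
          rw [hoffd, mul_zero, add_zero]
          exact tle_refl' _
        · have hoff : offDiagPart A i j = A i j := by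
            show (if i = j then (0 : k) else A i j) = A i j
            exact if_neg (fun h => hij h.symm)
          rw [hoff, add_mul]
          have h2 : tle (ε * (A i j * v j)) (A i i * v i) := by
            have h3 := tle_mul_right' (A i i) (hB i j (fun h => hij h.symm))
            have e3 : ε * Bm i j * v j * A i i = ε * (A i j * v j) := by
              rw [hBmapp]
              calc ε * (A i j * tinv (A i i)) * v j * A i i
                  = ε * (A i j * v j) * (A i i * tinv (A i i)) := by ring
                _ = ε * (A i j * v j) := by rw [mul_tinv' (hdiag i), mul_one]
            rw [e3, mul_comm (v i) (A i i)] at h3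
            exact h3
          refine add_tle' (tle_trans' ?_ h2) ?_
          · have h4 := tle_mul_right' (A i j * v j) hε.1
            rw [one_mul] at h4
            exact h4
          · rw [mul_assoc]
            exact h2
      · have h6 := tle_sum' (s := Finset.univ)
          (f := fun j => (A i j + ε * offDiagPart A i j) * v j) (Finset.mem_univ i)
        have e6 : (A i i + ε * offDiagPart A i i) * v i = A i i * v i := by
          rw [hoffd, mul_zero, add_zero]
        rw [← e6]
        exact h6
    · refine Or.inr ⟨v, hvne, ?_⟩
      funext i
      have eL : A.mulVec v i = ∑ j, A i j * v j := by
        simp [Matrix.mulVec, dotProduct]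
      have eR : (offDiagPart A).mulVec v i = ∑ j ∈ Finset.univ.erase i, A i j * v j := by
        have : (offDiagPart A).mulVec v i = ∑ j, (if i = j then 0 else A i j) * v j := by
          simp [Matrix.mulVec, dotProduct, offDiagPart]
        rw [this, ← Finset.add_sum_erase _ _ (Finset.mem_univ i), if_pos rfl, zero_mul,
          zero_add]
        exact Finset.sum_congr rfl fun j hj => by
          rw [if_neg (fun h => (Finset.mem_erase.mp hj).1 h.symm)]
      have key : tle (A i i * v i) (∑ j ∈ Finset.univ.erase i, A i j * v j) := by
        have h1 := tle_mul_left' (A i i) (hB i)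
        rw [Finset.mul_sum] at h1
        refine tle_trans' h1 (sum_tle' ?_)
        intro j hj
        have e : A i i * (Bm i j * v j) = A i j * v j := by
          rw [hBmapp]
          calc A i i * (A i j * tinv (A i i) * v j)
              = A i j * v j * (A i i * tinv (A i i)) := by ring
            _ = A i j * v j := by rw [mul_tinv' (hdiag i), mul_one]
        rw [e]
        exact tle_sum' (f := fun l => A i l * v l) hj
      rw [eL, eR]
      refine tle_antisymm' (sum_tle' ?_) (sum_tle' ?_)
      · intro j _
        by_cases hij : j = i
        · subst hij
          exact key
        · exact tle_sum' (f := fun l => A i l * v l)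
            (Finset.mem_erase.mpr ⟨hij, Finset.mem_univ j⟩)
      · intro j hj
        exact tle_sum' (f := fun l => A i l * v l) (Finset.mem_univ j)
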